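/- For all n ≥ 0, all real x, y, q, and all nonzero reals a, b: H_n(x|a,q) = ∑_{j=0}^n [n choose j]_q P_j(x | y, a/b, q) (a/b)^{n-j} H_{n-j}(y|b,q), where H_n(·|a,q) are big q-Hermite polynomials and P_j are Al-Salam–Chihara polynomials. -/
import Mathlib


noncomputable def qint (q : ℝ) (n : ℕ) : ℝ := ∑ i ∈ Finset.range n, q ^ i

noncomputable def qfact (q : ℝ) (n : ℕ) : ℝ := ∏ i ∈ Finset.range n, qint q (i + 1)

noncomputable def qPoch (a q : ℝ) (n : ℕ) : ℝ := ∏ i ∈ Finset.range n, (1 - a * q ^ i)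

/-- Gaussian binomial coefficient as a polynomial in `q`, via the Pascal-type recurrence. -/
noncomputable def qbinom (q : ℝ) : ℕ → ℕ → ℝ
  | _, 0 => 1
  | 0, _ + 1 => 0
  | n + 1, k + 1 => qbinom q n k + q ^ (k + 1) * qbinom q n (k + 1)

/-- Rescaled continuous q-Hermite polynomials `H_n(x|q)`. -/
noncomputable def qHermite (q x : ℝ) : ℕ → ℝ
  | 0 => 1
  | 1 => x
  | n + 2 => x * qHermite q x (n + 1) - qint q (n + 1) * qHermite q x n

/-- Chebyshev polynomials of the second kind. -/
noncomputable def Ucheb (x : ℝ) : ℕ → ℝ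
  | 0 => 1
  | 1 => 2 * x
  | n + 2 => 2 * x * Ucheb x (n + 1) - Ucheb x n

/-- Probabilist's Hermite polynomials. -/
noncomputable def He (x : ℝ) : ℕ → ℝ
  | 0 => 1
  | 1 => x
  | n + 2 => x * He x (n + 1) - (n + 1 : ℝ) * He x n

/-- Big q-Hermite polynomials `H_n(x|a,q)`. -/
noncomputable def bigH (q a x : ℝ) (n : ℕ) : ℝ :=
  ∑ i ∈ Finset.range (n + 1),
    qbinom q n i * q ^ (i.choose 2) * (-a) ^ i * qHermite q x (n - i)

/-- Al-Salam--Chihara polynomials `P_n(x|y,ρ,q)`. -/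
noncomputable def ASC (q x y ρ : ℝ) : ℕ → ℝ
  | 0 => 1
  | 1 => x - ρ * y
  | n + 2 =>
      (x - ρ * y * q ^ (n + 1)) * ASC q x y ρ (n + 1)
        - qint q (n + 1) * (1 - ρ ^ 2 * q ^ n) * ASC q x y ρ n

/-- Auxiliary polynomials `B_n(x|q)`. -/
noncomputable def Bpoly (q x : ℝ) : ℕ → ℝ
  | 0 => 1
  | 1 => -x
  | n + 2 => -q ^ (n + 1) * x * Bpoly q x (n + 1) + q ^ n * qint q (n + 1) * Bpoly q x n

lemma qint_zero (q : ℝ) : qint q 0 = 0 := by simp [qint]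

lemma qint_one (q : ℝ) : qint q 1 = 1 := by simp [qint]

lemma qint_succ (q : ℝ) (n : ℕ) : qint q (n + 1) = qint q n + q ^ n := by
  rw [qint, Finset.sum_range_succ]; rfl

lemma qint_add (q : ℝ) (m n : ℕ) : qint q (m + n) = qint q m + q ^ m * qint q n := by
  induction n with
  | zero => simp [qint]
  | succ n ih =>
    rw [show m + (n+1) = (m+n)+1 by omega, qint_succ, qint_succ, ih, pow_add]
    ring

lemma qbinom_zero (q : ℝ) (n : ℕ) : qbinom q n 0 = 1 := by
  cases n <;> rfl

lemma qbinom_eq_zero (q : ℝ) {n k : ℕ} (h : n < k) : qbinom q n k = 0 := by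
  induction n generalizing k with
  | zero => match k, h with | k + 1, _ => rfl
  | succ n ih =>
    match k, h with
    | k + 1, h =>
      show qbinom q n k + q ^ (k + 1) * qbinom q n (k + 1) = 0
      rw [ih (by omega), ih (by omega)]
      ring

lemma qbinom_self (q : ℝ) (n : ℕ) : qbinom q n n = 1 := by
  induction n with
  | zero => rfl
  | succ n ih =>
    show qbinom q n n + q ^ (n + 1) * qbinom q n (n + 1) = 1
    rw [ih, qbinom_eq_zero q (by omega)]
    ring

lemma qbinom_one (q : ℝ) (n : ℕ) : qbinom q n 1 = qint q n := by
  induction n with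
  | zero => simp [qint, qbinom_eq_zero q (by omega : 0 < 1)]
  | succ n ih =>
    show qbinom q n 0 + q ^ 1 * qbinom q n 1 = _
    rw [qbinom_zero, ih, show n + 1 = 1 + n by omega, qint_add, qint_one]
    try ring

lemma qbinom_pascal (q : ℝ) (n k : ℕ) :
    qbinom q (n + 1) (k + 1) = qbinom q n k + q ^ (k + 1) * qbinom q n (k + 1) := rfl

lemma qbinom_pascal' (q : ℝ) (n k : ℕ) :
    qbinom q (n + 1) (k + 1) = q ^ (n - k) * qbinom q n k + qbinom q n (k + 1) := by
  induction n generalizing k with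
  | zero =>
    match k with
    | 0 => simp [qbinom_self, qbinom_eq_zero q (by omega : 0 < 1)]
    | k + 1 => simp [qbinom_eq_zero q (show 1 < k+2 by omega), qbinom_eq_zero q (show 0 < k+2 by omega),
        qbinom_eq_zero q (show 0 < k+1 by omega)]
  | succ n ih =>
    match k with
    | 0 =>
      show qbinom q (n+1) 0 + q ^ 1 * qbinom q (n+1) 1 = _
      rw [qbinom_zero, qbinom_one]
      have h1 : qint q (n + 2) = qint q (n+1) + q^(n+1) * qint q 1 := qint_add q (n+1) 1
      have h2 : qint q (n + 2) = qint q 1 + q^1 * qint q (n+1) := by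
        rw [show n + 2 = 1 + (n+1) by omega]; exact qint_add q 1 (n+1)
      rw [qint_one] at h1 h2
      simp only [Nat.sub_zero, mul_one, zero_add, qbinom_one, pow_one] at *
      linarith
    | k + 1 =>
      rcases le_or_gt (k + 1) n with h | h
      · conv_lhs => rw [qbinom_pascal q (n+1) (k+1), ih k, ih (k+1)]
        conv_rhs => rw [qbinom_pascal q n k, qbinom_pascal q n (k+1)]
        rw [show n + 1 - (k + 1) = (n - (k+1)) + 1 by omega,
          show n - k = (n - (k+1)) + 1 by omega]
        ring
      · rcases eq_or_lt_of_le (by omega : n ≤ k) with rfl | h2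
        · rw [qbinom_self, qbinom_self, qbinom_eq_zero q (show n + 1 < n + 2 by omega)]
          simp
        · rw [qbinom_eq_zero q (show n + 2 < k + 2 by omega),
            qbinom_eq_zero q (show n + 1 < k + 1 by omega),
            qbinom_eq_zero q (show n + 1 < k + 2 by omega)]
          ring

lemma qbinom_absorb (q : ℝ) : ∀ n k : ℕ,
    qint q (k + 1) * qbinom q n (k + 1) = qint q (n - k) * qbinom q n k := by
  intro n
  induction n with
  | zero =>
    intro k
    rw [qbinom_eq_zero q (show 0 < k + 1 by omega), show 0 - k = 0 by omega, qint_zero]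
    ring
  | succ n ih =>
    intro k
    match k with
    | 0 => rw [qbinom_one, qint_one, qbinom_zero, Nat.sub_zero]; ring
    | j + 1 =>
      rcases le_or_gt (j + 1) n with h | h
      · obtain ⟨e, he⟩ : ∃ e, n = j + 1 + e := ⟨n - (j+1), by omega⟩
        have hA := ih (j + 1)
        have hB := ih j
        rw [show n - (j+1) = e by omega] at hA
        rw [show n - j = e + 1 by omega] at hB
        have h1 : qint q (n + 1) = qint q (j + 2) + q ^ (j + 2) * qint q e := by
          rw [show n + 1 = (j + 2) + e by omega]; exact qint_add q (j+2) e
        have h2 : qint q (n + 1) = qint q (j + 1) + q ^ (j + 1) * qint q (e + 1) := by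
          rw [show n + 1 = (j + 1) + (e + 1) by omega]; exact qint_add q (j+1) (e+1)
        rw [show n + 1 - (j + 1) = e + 1 by omega, qbinom_pascal q n (j+1), qbinom_pascal q n j]
        linear_combination (q : ℝ) ^ (j + 2) * hA + hB + (h2 - h1) * qbinom q n (j + 1)
      · rw [qbinom_eq_zero q (show n + 1 < j + 1 + 1 by omega),
          show n + 1 - (j + 1) = n - j by omega]
        rcases le_or_gt (j + 1) (n + 1) with h2 | h2
        · rw [show n - j = 0 by omega, qint_zero]; ring
        · rw [qbinom_eq_zero q (show n + 1 < j + 1 by omega)]; ring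

lemma qbinom_mul_qint (q : ℝ) (n j : ℕ) :
    qint q (n + 1 - j) * qbinom q (n + 1) j = qint q (n + 1) * qbinom q n j := by
  match j with
  | 0 => rw [qbinom_zero, qbinom_zero, Nat.sub_zero]
  | k + 1 =>
    rcases le_or_gt (k + 1) n with h | h
    · have hD := qbinom_absorb q n k
      have hq : qint q (n + 1) = qint q (k + 1) + q ^ (k + 1) * qint q (n - k) := by
        rw [show n + 1 = (k + 1) + (n - k) by omega]; exact qint_add q (k+1) (n-k)
      rw [show n + 1 - (k + 1) = n - k by omega, qbinom_pascal q n k]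
      linear_combination -hD - hq * qbinom q n (k + 1)
    · rw [show n + 1 - (k + 1) = 0 by omega, qint_zero,
        qbinom_eq_zero q (show n < k + 1 by omega)]
      ring

lemma qbinom_mul_qint' (q : ℝ) (n j : ℕ) :
    qint q (j + 1) * qbinom q (n + 1) (j + 1) = qint q (n + 1) * qbinom q n j := by
  rw [qbinom_absorb q (n + 1) j]
  exact qbinom_mul_qint q n j

lemma qHermite_rec (q x : ℝ) (n : ℕ) :
    qHermite q x (n + 1) = x * qHermite q x n - qint q n * qHermite q x (n - 1) := by
  match n with
  | 0 => simp [qHermite, qint_zero]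
  | m + 1 => rfl

lemma ASC_rec (q x y ρ : ℝ) (n : ℕ) :
    ASC q x y ρ (n + 1) =
      (x - ρ * y * q ^ n) * ASC q x y ρ n
        - qint q n * (1 - ρ ^ 2 * q ^ (n - 1)) * ASC q x y ρ (n - 1) := by
  match n with
  | 0 => simp [ASC, qint_zero]
  | m + 1 => rfl

lemma bigH_zero (q a x : ℝ) : bigH q a x 0 = 1 := by
  simp [bigH, qHermite, qbinom_zero]

lemma bigH_one (q a x : ℝ) : bigH q a x 1 = x - a := by
  rw [bigH]
  rw [Finset.sum_range_succ, Finset.sum_range_succ, Finset.sum_range_zero]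
  simp [qbinom_zero, qbinom_self, qHermite]
  ring

lemma bigH_rec (q a x : ℝ) (n : ℕ) :
    bigH q a x (n + 2) =
      (x - a * q ^ (n + 1)) * bigH q a x (n + 1) - qint q (n + 1) * bigH q a x n := by
  have hg3 : bigH q a x (n + 2) =
      (∑ k ∈ Finset.range (n + 2),
        (-a * q ^ (n + 1)) *
          (qbinom q (n+1) k * q ^ (k.choose 2) * (-a) ^ k * qHermite q x (n + 1 - k)))
      + ∑ i ∈ Finset.range (n + 2),
          qbinom q (n+1) i * q ^ (i.choose 2) * (-a) ^ i * qHermite q x (n + 2 - i) := by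
    rw [bigH, show n + 2 + 1 = n + 2 + 1 from rfl, Finset.sum_range_succ']
    have hsplit : ∀ k ∈ Finset.range (n + 2),
        qbinom q (n+2) (k+1) * q ^ ((k+1).choose 2) * (-a) ^ (k+1) * qHermite q x (n + 2 - (k+1))
        = (-a * q ^ (n + 1)) *
            (qbinom q (n+1) k * q ^ (k.choose 2) * (-a) ^ k * qHermite q x (n + 1 - k))
          + qbinom q (n+1) (k+1) * q ^ ((k+1).choose 2) * (-a) ^ (k+1)
              * qHermite q x (n + 2 - (k+1)) := by
      intro k hk
      rw [Finset.mem_range] at hk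
      rw [qbinom_pascal' q (n+1) k, show n + 2 - (k+1) = n + 1 - k by omega,
        show (k+1).choose 2 = k.choose 2 + k by
          rw [Nat.choose_succ_succ, Nat.choose_one_right]; norm_num; try omega]
      have hpow : (q : ℝ) ^ (n + 1 - k) * q ^ (k.choose 2 + k) = q ^ (n + 1) * q ^ (k.choose 2) := by
        rw [← pow_add, ← pow_add, show (n + 1 - k) + (k.choose 2 + k) = (n+1) + k.choose 2 by omega]
      linear_combination
        (-a) * (-a) ^ k * qbinom q (n+1) k * qHermite q x (n + 1 - k) * hpow
    rw [Finset.sum_congr rfl hsplit, Finset.sum_add_distrib]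
    have hshift : (∑ k ∈ Finset.range (n + 2),
          qbinom q (n+1) (k+1) * q ^ ((k+1).choose 2) * (-a) ^ (k+1) * qHermite q x (n + 2 - (k+1)))
        + qbinom q (n+2) 0 * q ^ (Nat.choose 0 2) * (-a) ^ 0 * qHermite q x (n + 2 - 0)
        = ∑ i ∈ Finset.range (n + 2),
            qbinom q (n+1) i * q ^ (i.choose 2) * (-a) ^ i * qHermite q x (n + 2 - i) := by
      have h1 := Finset.sum_range_succ'
        (fun i => qbinom q (n+1) i * q ^ (i.choose 2) * (-a) ^ i * qHermite q x (n + 2 - i)) (n+2)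
      have h2 := Finset.sum_range_succ
        (fun i => qbinom q (n+1) i * q ^ (i.choose 2) * (-a) ^ i * qHermite q x (n + 2 - i)) (n+2)
      simp only [qbinom_zero, qbinom_eq_zero q (show n + 1 < n + 2 by omega)] at h1 h2 ⊢
      rw [show n + 2 + 1 = n + 3 from rfl] at h1 h2
      rw [h1] at h2
      linarith [h2]
    linarith [hshift]
  have hterm : ∀ i ∈ Finset.range (n + 2),
      qbinom q (n+1) i * q ^ (i.choose 2) * (-a) ^ i * qHermite q x (n + 2 - i)
      = x * (qbinom q (n+1) i * q ^ (i.choose 2) * (-a) ^ i * qHermite q x (n + 1 - i))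
        - qint q (n+1) * (qbinom q n i * q ^ (i.choose 2) * (-a) ^ i * qHermite q x (n - i)) := by
    intro i hi
    rw [Finset.mem_range] at hi
    rw [show n + 2 - i = (n + 1 - i) + 1 by omega, qHermite_rec,
      show n + 1 - i - 1 = n - i by omega]
    linear_combination (-(q ^ (i.choose 2) * (-a) ^ i * qHermite q x (n - i))) * qbinom_mul_qint q n i
  rw [hg3, Finset.sum_congr rfl hterm, Finset.sum_sub_distrib, ← Finset.mul_sum, ← Finset.mul_sum,
    ← Finset.mul_sum,
    Finset.sum_range_succ (fun i => qbinom q n i * q ^ (i.choose 2) * (-a) ^ i * qHermite q x (n - i)) (n+1),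
    qbinom_eq_zero q (show n < n + 1 by omega), bigH, bigH]
  simp only [show n + 1 + 1 = n + 2 from rfl]
  ring

lemma bigH_rec' (q b y : ℝ) (m : ℕ) :
    bigH q b y (m + 1) =
      (y - b * q ^ m) * bigH q b y m - qint q m * bigH q b y (m - 1) := by
  match m with
  | 0 => rw [bigH_one, bigH_zero, qint_zero]; ring
  | m + 1 =>
    rw [show m + 1 - 1 = m from rfl]
    exact bigH_rec q b y m

lemma shift_sum (f : ℕ → ℝ) (m : ℕ) (hm : f m = 0) :
    (∑ k ∈ Finset.range m, f (k + 1)) + f 0 = ∑ j ∈ Finset.range m, f j := by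
  rw [← Finset.sum_range_succ' f m, Finset.sum_range_succ, hm, add_zero]

noncomputable def Ssum (q x y ρ b : ℝ) (m : ℕ) : ℝ :=
  ∑ j ∈ Finset.range (m + 1),
    qbinom q m j * ASC q x y ρ j * ρ ^ (m - j) * bigH q b y (m - j)

lemma Ssum_rec (q x y ρ b : ℝ) (n : ℕ) :
    Ssum q x y ρ b (n + 2) =
      (x - ρ * b * q ^ (n + 1)) * Ssum q x y ρ b (n + 1)
        - qint q (n + 1) * Ssum q x y ρ b n := by
  -- abbreviations as plain `let`-free expressions written out
  -- Step 1: peel and apply Pascal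
  have h1 : Ssum q x y ρ b (n + 2)
      = (∑ k ∈ Finset.range (n + 2),
          (qbinom q (n+1) k * ASC q x y ρ (k+1) * ρ ^ (n+1-k) * bigH q b y (n+1-k)
            + q ^ (k+1) * qbinom q (n+1) (k+1) * ASC q x y ρ (k+1) * ρ ^ (n+1-k)
                * bigH q b y (n+1-k)))
        + ASC q x y ρ 0 * ρ ^ (n+2) * bigH q b y (n+2) := by
    rw [Ssum, Finset.sum_range_succ']
    congr 1
    · apply Finset.sum_congr rfl
      intro k hk; rw [Finset.mem_range] at hk
      rw [show n + 2 - (k+1) = n + 1 - k by omega, qbinom_pascal]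
      ring
    · rw [qbinom_zero, Nat.sub_zero]; ring
  -- Step 2: the V-part reassembled
  have h2 : (∑ k ∈ Finset.range (n + 2),
        q ^ (k+1) * qbinom q (n+1) (k+1) * ASC q x y ρ (k+1) * ρ ^ (n+1-k)
          * bigH q b y (n+1-k))
      + ASC q x y ρ 0 * ρ ^ (n+2) * bigH q b y (n+2)
      = ∑ j ∈ Finset.range (n + 2),
          q ^ j * qbinom q (n+1) j * ASC q x y ρ j * ρ ^ (n+2-j) * bigH q b y (n+2-j) := by
    have hc : (∑ k ∈ Finset.range (n + 2),
          q ^ (k+1) * qbinom q (n+1) (k+1) * ASC q x y ρ (k+1) * ρ ^ (n+1-k)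
            * bigH q b y (n+1-k))
        = ∑ k ∈ Finset.range (n + 2),
            (fun j => q ^ j * qbinom q (n+1) j * ASC q x y ρ j * ρ ^ (n+2-j)
              * bigH q b y (n+2-j)) (k+1) := by
      apply Finset.sum_congr rfl
      intro k hk; rw [Finset.mem_range] at hk
      simp only []
      rw [show n + 2 - (k+1) = n + 1 - k by omega]
    have hd : ASC q x y ρ 0 * ρ ^ (n+2) * bigH q b y (n+2)
        = (fun j => q ^ j * qbinom q (n+1) j * ASC q x y ρ j * ρ ^ (n+2-j)
            * bigH q b y (n+2-j)) 0 := by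
      simp [qbinom_zero]
    rw [hc, hd]
    exact shift_sum
      (fun j => q ^ j * qbinom q (n+1) j * ASC q x y ρ j * ρ ^ (n+2-j) * bigH q b y (n+2-j))
      (n+2) (by simp [qbinom_eq_zero q (show n + 1 < n + 2 by omega)])
  rw [h1, Finset.sum_add_distrib, add_assoc, h2]
  -- Step 3: expand the U part via the ASC recurrence
  have h3 : ∀ k ∈ Finset.range (n + 2),
      qbinom q (n+1) k * ASC q x y ρ (k+1) * ρ ^ (n+1-k) * bigH q b y (n+1-k)
      = x * (qbinom q (n+1) k * ASC q x y ρ k * ρ ^ (n+1-k) * bigH q b y (n+1-k))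
        - ρ * y * (q ^ k * (qbinom q (n+1) k * ASC q x y ρ k * ρ ^ (n+1-k) * bigH q b y (n+1-k)))
        - qint q k * (1 - ρ^2 * q^(k-1)) * qbinom q (n+1) k * ASC q x y ρ (k-1)
            * ρ ^ (n+1-k) * bigH q b y (n+1-k) := by
    intro k hk
    rw [ASC_rec]
    ring
  -- Step 4: expand the V part via the bigH recurrence in y
  have h4 : ∀ j ∈ Finset.range (n + 2),
      q ^ j * qbinom q (n+1) j * ASC q x y ρ j * ρ ^ (n+2-j) * bigH q b y (n+2-j)
      = ρ * y * (q ^ j * (qbinom q (n+1) j * ASC q x y ρ j * ρ ^ (n+1-j) * bigH q b y (n+1-j)))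
        - ρ * b * q ^ (n+1) * (qbinom q (n+1) j * ASC q x y ρ j * ρ ^ (n+1-j) * bigH q b y (n+1-j))
        - q ^ j * qint q (n+1-j) * qbinom q (n+1) j * ASC q x y ρ j * ρ^2 * ρ ^ (n-j)
            * bigH q b y (n-j) := by
    intro j hj
    rw [Finset.mem_range] at hj
    rw [show n + 2 - j = (n + 1 - j) + 1 by omega, bigH_rec',
      show n + 1 - j - 1 = n - j by omega]
    have hp1 : (ρ : ℝ) ^ ((n+1-j) + 1) = ρ * ρ ^ (n+1-j) := by
      rw [pow_succ]; ring
    have hp2 : (q : ℝ) ^ j * q ^ (n+1-j) = q ^ (n+1) := by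
      rw [← pow_add, show j + (n+1-j) = n+1 by omega]
    rcases le_or_gt j n with h | h
    · have hp3 : (ρ : ℝ) ^ ((n+1-j) + 1) = ρ^2 * ρ ^ (n-j) := by
        rw [← pow_add, show 2 + (n - j) = (n+1-j) + 1 by omega]
      linear_combination
        (-(b * qbinom q (n+1) j * ASC q x y ρ j * ρ * ρ ^ (n+1-j) * bigH q b y (n+1-j))) * hp2
        + (-(q ^ j * qint q (n+1-j) * qbinom q (n+1) j * ASC q x y ρ j
            * bigH q b y (n-j))) * hp3
    · have hj' : j = n + 1 := by omega
      subst hj'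
      rw [show n + 1 - (n+1) = 0 by omega, qint_zero]
      ring
  have hw1 : ∑ k ∈ Finset.range (n + 2),
        qint q k * (1 - ρ^2 * q^(k-1)) * qbinom q (n+1) k * ASC q x y ρ (k-1)
          * ρ ^ (n+1-k) * bigH q b y (n+1-k)
      = qint q (n+1) * Ssum q x y ρ b n
        - ρ^2 * qint q (n+1) * ∑ j ∈ Finset.range (n+1),
            q ^ j * (qbinom q n j * ASC q x y ρ j * ρ ^ (n-j) * bigH q b y (n-j)) := by
    rw [show n + 2 = n + 1 + 1 from rfl, Finset.sum_range_succ']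
    have hz : qint q 0 * (1 - ρ^2 * q^(0-1)) * qbinom q (n+1) 0 * ASC q x y ρ (0-1)
        * ρ ^ (n+1-0) * bigH q b y (n+1-0) = 0 := by
      rw [qint_zero]; ring
    rw [hz, add_zero]
    have hterm : ∀ j ∈ Finset.range (n+1),
        qint q (j+1) * (1 - ρ^2 * q^((j+1)-1)) * qbinom q (n+1) (j+1) * ASC q x y ρ ((j+1)-1)
          * ρ ^ (n+1-(j+1)) * bigH q b y (n+1-(j+1))
        = qint q (n+1) * (qbinom q n j * ASC q x y ρ j * ρ ^ (n-j) * bigH q b y (n-j))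
          - ρ^2 * qint q (n+1) * (q ^ j * (qbinom q n j * ASC q x y ρ j * ρ ^ (n-j)
              * bigH q b y (n-j))) := by
      intro j hj
      rw [Finset.mem_range] at hj
      rw [show (j+1) - 1 = j from rfl, show n + 1 - (j+1) = n - j by omega]
      linear_combination ((1 - ρ^2 * q^j) * ASC q x y ρ j * ρ ^ (n-j) * bigH q b y (n-j))
        * qbinom_mul_qint' q n j
    rw [Finset.sum_congr rfl hterm, Finset.sum_sub_distrib]
    simp only [← Finset.mul_sum]
    rw [Ssum]
    try ring
  have hw2 : ∑ j ∈ Finset.range (n + 2),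
        q ^ j * qint q (n+1-j) * qbinom q (n+1) j * ASC q x y ρ j * ρ^2 * ρ ^ (n-j)
          * bigH q b y (n-j)
      = ρ^2 * qint q (n+1) * ∑ j ∈ Finset.range (n+1),
          q ^ j * (qbinom q n j * ASC q x y ρ j * ρ ^ (n-j) * bigH q b y (n-j)) := by
    rw [show n + 2 = n + 1 + 1 from rfl, Finset.sum_range_succ]
    have hz : q ^ (n+1) * qint q (n+1-(n+1)) * qbinom q (n+1) (n+1) * ASC q x y ρ (n+1) * ρ^2
        * ρ ^ (n-(n+1)) * bigH q b y (n-(n+1)) = 0 := by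
      rw [show n + 1 - (n+1) = 0 by omega, qint_zero]; ring
    rw [hz, add_zero]
    have hterm : ∀ j ∈ Finset.range (n+1),
        q ^ j * qint q (n+1-j) * qbinom q (n+1) j * ASC q x y ρ j * ρ^2 * ρ ^ (n-j)
          * bigH q b y (n-j)
        = ρ^2 * qint q (n+1) * (q ^ j * (qbinom q n j * ASC q x y ρ j * ρ ^ (n-j)
            * bigH q b y (n-j))) := by
      intro j hj
      rw [Finset.mem_range] at hj
      linear_combination (q ^ j * ASC q x y ρ j * ρ^2 * ρ ^ (n-j) * bigH q b y (n-j))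
        * qbinom_mul_qint q n j
    rw [Finset.sum_congr rfl hterm]
    simp only [← Finset.mul_sum]
    try ring
  rw [Finset.sum_congr rfl h3, Finset.sum_congr rfl h4, Finset.sum_sub_distrib,
    Finset.sum_sub_distrib, Finset.sum_sub_distrib, Finset.sum_sub_distrib, hw1, hw2]
  have hS1 : (∑ k ∈ Finset.range (n + 2),
        qbinom q (n+1) k * ASC q x y ρ k * ρ ^ (n+1-k) * bigH q b y (n+1-k))
      = Ssum q x y ρ b (n+1) := by
    rw [Ssum]
  simp only [← Finset.mul_sum]
  rw [hS1]
  ring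

lemma main_aux (q x y ρ b : ℝ) (n : ℕ) : bigH q (ρ * b) x n = Ssum q x y ρ b n := by
  induction n using Nat.twoStepInduction with
  | zero =>
    rw [bigH_zero, Ssum]
    simp [qbinom_zero, ASC, bigH_zero]
  | one =>
    rw [bigH_one, Ssum, Finset.sum_range_succ, Finset.sum_range_succ, Finset.sum_range_zero]
    simp [qbinom_zero, qbinom_self, ASC, bigH_zero, bigH_one]
    ring
  | more n ih1 ih2 =>
    rw [bigH_rec, Ssum_rec, ih1, ih2]

theorem bigH_eq_sum_ASC_bigH (q x y a b : ℝ) (ha : a ≠ 0) (hb : b ≠ 0) (n : ℕ) :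
    bigH q a x n =
      ∑ j ∈ Finset.range (n + 1),
        qbinom q n j * ASC q x y (a / b) j * (a / b) ^ (n - j) * bigH q b y (n - j) := by 
  have h := main_aux q x y (a / b) b n
  rw [div_mul_cancel₀ a hb] at h
  exact h
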